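/- arXiv:2506.18142 — 2 statements merged into one kernel-verified Lean document; each statement's English description precedes it below -/
import Mathlib

section
/- Let C₀ = {∑_{j=1}^∞ 4^{-j} ε_j : ε_j ∈ {0,3}} be the self-similar Cantor set of base-4 expansions with digits 0 and 3. Then the Minkowski sum C₀ + (-1/2)·C₀ = {x - y/2 : x, y ∈ C₀} equals the interval [-1/2, 1]. -/
open Set Pointwise

/-- The base-4 Cantor set with digits `{0,3}`. -/
noncomputable def Cantor4 : Set ℝ :=
  {x | ∃ ε : ℕ → ℝ, (∀ j, ε j = 0 ∨ ε j = 3) ∧ x = ∑' j : ℕ, ε j / 4 ^ (j + 1)}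

/-- Greedy digit in `{-1,0,1,2}`. -/
noncomputable def c4digit (t : ℝ) : ℤ := min ⌊4 * t + 1/3⌋ 2

/-- Remainder sequence. -/
noncomputable def c4seq (z : ℝ) : ℕ → ℝ
  | 0 => z
  | n + 1 => 4 * c4seq z n - c4digit (c4seq z n)

lemma c4digit_le (t : ℝ) : c4digit t ≤ 2 := min_le_right _ _

lemma c4digit_ge {t : ℝ} (ht : -(1/3) ≤ t) : -1 ≤ c4digit t := by
  refine le_min ?_ (by norm_num)
  rw [Int.le_floor]
  push_cast
  linarith

lemma c4_step {t : ℝ} (ht : t ∈ Icc (-(1/3) : ℝ) (2/3)) :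
    4 * t - c4digit t ∈ Icc (-(1/3) : ℝ) (2/3) := by
  obtain ⟨h1, h2⟩ := ht
  by_cases h : ⌊4 * t + 1/3⌋ ≤ 2
  · have hd : c4digit t = ⌊4 * t + 1/3⌋ := min_eq_left h
    have hfl : (⌊4 * t + 1/3⌋ : ℝ) ≤ 4 * t + 1/3 := Int.floor_le _
    have hfu : 4 * t + 1/3 < ⌊4 * t + 1/3⌋ + 1 := Int.lt_floor_add_one _
    rw [hd]
    constructor <;> linarith
  · have hd : c4digit t = 2 := min_eq_right (by omega)
    push_neg at h
    have h3 : (3 : ℤ) ≤ ⌊4 * t + 1/3⌋ := by omega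
    have h3' : (3 : ℝ) ≤ 4 * t + 1/3 := by
      have := Int.le_floor.mp h3
      push_cast at this
      linarith
    rw [hd]
    push_cast
    constructor <;> linarith

lemma c4seq_mem {z : ℝ} (hz : z ∈ Icc (-(1/3) : ℝ) (2/3)) :
    ∀ n, c4seq z n ∈ Icc (-(1/3) : ℝ) (2/3) := by
  intro n
  induction n with
  | zero => exact hz
  | succ n ih => exact c4_step ih

/-- Partial sum identity. -/
lemma c4seq_partial (z : ℝ) (n : ℕ) :
    z - ∑ j ∈ Finset.range n, (c4digit (c4seq z j) : ℝ) / 4 ^ (j + 1)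
      = c4seq z n / 4 ^ n := by
  induction n with
  | zero => simp [c4seq]
  | succ n ih =>
    rw [Finset.sum_range_succ]
    have hstep : c4seq z (n + 1) = 4 * c4seq z n - c4digit (c4seq z n) := rfl
    have key : c4seq z n / 4 ^ n - (c4digit (c4seq z n) : ℝ) / 4 ^ (n + 1)
        = c4seq z (n + 1) / 4 ^ (n + 1) := by
      rw [hstep]
      field_simp
      ring
    linarith [ih, key]

lemma summable_digits (c : ℕ → ℝ) (hc : ∀ j, |c j| ≤ 3) :
    Summable (fun j => c j / 4 ^ (j + 1)) := by
  have hgeom : Summable (fun j => 3 * (1/4 : ℝ) ^ j) :=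
    (summable_geometric_of_lt_one (by norm_num) (by norm_num)).mul_left 3
  have hb : ∀ j, ‖c j / 4 ^ (j + 1)‖ ≤ 3 * (1/4 : ℝ) ^ j := by
    intro j
    rw [Real.norm_eq_abs]
    calc |c j / 4 ^ (j + 1)| = |c j| / 4 ^ (j + 1) := by
          rw [abs_div, abs_of_pos (by positivity : (0:ℝ) < 4 ^ (j+1))]
      _ ≤ 3 / 4 ^ j := by
          apply div_le_div₀ (by norm_num) (hc j) (by positivity)
          exact pow_le_pow_right₀ (by norm_num) (Nat.le_succ j)
      _ = 3 * (1/4 : ℝ) ^ j := by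
          rw [div_pow, one_pow]; ring
  exact Summable.of_norm (Summable.of_nonneg_of_le (fun j => norm_nonneg _) hb hgeom)

lemma tsum_three : ∑' j : ℕ, (3 : ℝ) / 4 ^ (j + 1) = 1 := by
  have h : ∀ j : ℕ, (3 : ℝ) / 4 ^ (j + 1) = (3/4) * (1/4) ^ j := by
    intro j
    rw [div_pow, one_pow]
    field_simp
    ring
  rw [tsum_congr h, tsum_mul_left, tsum_geometric_of_lt_one (by norm_num) (by norm_num)]
  norm_num

lemma cantor4_subset_Icc : Cantor4 ⊆ Icc (0 : ℝ) 1 := by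
  rintro x ⟨ε, hε, rfl⟩
  have habs : ∀ j, |ε j| ≤ 3 := by
    intro j; rcases hε j with h | h <;> rw [h] <;> norm_num
  have hsum := summable_digits ε habs
  constructor
  · apply tsum_nonneg
    intro j
    rcases hε j with h | h <;> rw [h] <;> positivity
  · refine le_trans (Summable.tsum_le_tsum ?_ hsum (summable_digits (fun _ => 3) (by norm_num)))
      (le_of_eq tsum_three)
    intro j
    have : ε j ≤ 3 := by rcases hε j with h | h <;> rw [h] <;> norm_num
    gcongr

theorem cantor4_add_neg_half_smul :
    Cantor4 + (-(1/2) : ℝ) • Cantor4 = Set.Icc (-(1/2) : ℝ) 1 := by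
  apply Set.Subset.antisymm
  · rintro p hp
    rw [Set.mem_add] at hp
    obtain ⟨x, hx, b, hb, rfl⟩ := hp
    obtain ⟨y, hy, rfl⟩ := hb
    obtain ⟨hx0, hx1⟩ := cantor4_subset_Icc hx
    obtain ⟨hy0, hy1⟩ := cantor4_subset_Icc hy
    simp only [smul_eq_mul]
    constructor <;> linarith
  · intro z hz
    obtain ⟨hz1, hz2⟩ := hz
    set w : ℝ := 2/3 * z with hw
    have hwI : w ∈ Icc (-(1/3) : ℝ) (2/3) := ⟨by rw [hw]; linarith, by rw [hw]; linarith⟩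
    set m : ℕ → ℤ := fun j => c4digit (c4seq w j) with hm
    have hmem := c4seq_mem hwI
    have hml : ∀ j, -1 ≤ m j := fun j => c4digit_ge (hmem j).1
    have hmu : ∀ j, m j ≤ 2 := fun j => c4digit_le _
    have habs : ∀ j, |(m j : ℝ)| ≤ 3 := by
      intro j
      have h1 := hml j; have h2 := hmu j
      rw [abs_le]
      constructor <;> [exact_mod_cast (by omega : (-3 : ℤ) ≤ m j);
        exact_mod_cast (by omega : m j ≤ 3)]
    have hsm : Summable (fun j => (m j : ℝ) / 4 ^ (j + 1)) := summable_digits _ habs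
    have hpartial : Filter.Tendsto (fun n => ∑ j ∈ Finset.range n, (m j : ℝ) / 4 ^ (j + 1))
        Filter.atTop (nhds w) := by
      have heq : ∀ n, ∑ j ∈ Finset.range n, (m j : ℝ) / 4 ^ (j + 1)
          = w - c4seq w n / 4 ^ n := by
        intro n
        have := c4seq_partial w n
        linarith
      have htend : Filter.Tendsto (fun n : ℕ => c4seq w n / 4 ^ n) Filter.atTop (nhds 0) := by
        have hg : Filter.Tendsto (fun n : ℕ => (1/4 : ℝ) ^ n) Filter.atTop (nhds 0) :=
          tendsto_pow_atTop_nhds_zero_of_lt_one (by norm_num) (by norm_num)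
        refine squeeze_zero_norm (fun n => ?_) hg
        rw [Real.norm_eq_abs, abs_div, abs_of_pos (by positivity : (0:ℝ) < 4 ^ n)]
        have h1 : |c4seq w n| ≤ 1 := by
          obtain ⟨ha, hb⟩ := hmem n
          rw [abs_le]; constructor <;> linarith
        rw [div_pow, one_pow]
        rw [div_le_div_iff₀ (by positivity) (by positivity)]
        nlinarith [h1, (by positivity : (0:ℝ) < 4 ^ n)]
      have := Filter.Tendsto.sub (tendsto_const_nhds (x := w)) htend
      rw [sub_zero] at this
      exact this.congr (fun n => (heq n).symm)
    have hHas : HasSum (fun j => (m j : ℝ) / 4 ^ (j + 1)) w := by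
      have h := hsm.hasSum
      rwa [tendsto_nhds_unique hsm.hasSum.tendsto_sum_nat hpartial] at h
    set ε : ℕ → ℝ := fun j => if 1 ≤ m j then 3 else 0 with hε
    set δ : ℕ → ℝ := fun j => if m j = -1 ∨ m j = 1 then 3 else 0 with hδ
    have hεv : ∀ j, ε j = 0 ∨ ε j = 3 := by
      intro j; by_cases h : 1 ≤ m j <;> simp [hε, h]
    have hδv : ∀ j, δ j = 0 ∨ δ j = 3 := by
      intro j; by_cases h : m j = -1 ∨ m j = 1 <;> simp [hδ, h]
    have hεa : ∀ j, |ε j| ≤ 3 := by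
      intro j; rcases hεv j with h | h <;> rw [h] <;> norm_num
    have hδa : ∀ j, |δ j| ≤ 3 := by
      intro j; rcases hδv j with h | h <;> rw [h] <;> norm_num
    have hkey : ∀ j, ε j + (-(1/2)) * δ j = (3/2) * (m j : ℝ) := by
      intro j
      have h1 := hml j; have h2 := hmu j
      have hmd : m j = -1 ∨ m j = 0 ∨ m j = 1 ∨ m j = 2 := by omega
      rcases hmd with h | h | h | h <;> simp [hε, hδ, h] <;> norm_num
    have hxs : HasSum (fun j => ε j / 4 ^ (j + 1)) (∑' j, ε j / 4 ^ (j + 1)) :=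
      (summable_digits ε hεa).hasSum
    have hys : HasSum (fun j => δ j / 4 ^ (j + 1)) (∑' j, δ j / 4 ^ (j + 1)) :=
      (summable_digits δ hδa).hasSum
    have hz' : HasSum (fun j => ε j / 4 ^ (j + 1) + (-(1/2)) * (δ j / 4 ^ (j + 1))) z := by
      have h32 : HasSum (fun j => (3/2) * ((m j : ℝ) / 4 ^ (j + 1))) ((3/2) * w) :=
        hHas.mul_left _
      have hze : (3/2) * w = z := by rw [hw]; ring
      rw [hze] at h32
      have hfe : (fun j => ε j / 4 ^ (j + 1) + (-(1/2)) * (δ j / 4 ^ (j + 1)))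
          = fun j => (3/2) * ((m j : ℝ) / 4 ^ (j + 1)) := by
        funext j
        have h := hkey j
        linear_combination h / ((4 : ℝ) ^ (j + 1))
      rw [hfe]
      exact h32
    have hzeq : (∑' j, ε j / 4 ^ (j + 1)) + (-(1/2)) * (∑' j, δ j / 4 ^ (j + 1)) = z :=
      (hxs.add (hys.mul_left _)).unique hz'
    have hzw : z = (∑' j, ε j / 4 ^ (j + 1)) + (-(1/2) : ℝ) • (∑' j, δ j / 4 ^ (j + 1)) := by
      rw [smul_eq_mul]; linarith
    rw [hzw]
    exact Set.add_mem_add ⟨ε, hεv, rfl⟩ (Set.smul_mem_smul_set ⟨δ, hδv, rfl⟩)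
end

section
/- Let (N_k) and (M_k) be sequences of positive integers with N_k ≥ 2 and 1 < M_k < N_k^d, and let C ⊂ [0,1]^d be a fractal cube set: C = ⋂_k C_k, where C₀ = [0,1]^d and C_{k+1} is obtained by subdividing each cube of C_k into N_{k+1}^d congruent subcubes and keeping M_{k+1} of them. Then the packing dimension of C is at least limsup_{k→∞} log(M₁⋯M_k)/log(N₁⋯N_k). -/
open Set MeasureTheory Filter ENNReal

/-- Covering number of `s` by balls of radius `r` (`∞` if no finite cover exists). -/
noncomputable def coverNum {α : Type*} [PseudoMetricSpace α] (s : Set α) (r : ℝ) : ℝ≥0∞ :=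
  sInf ((fun t : Finset α => (t.card : ℝ≥0∞)) '' {t | s ⊆ ⋃ x ∈ t, Metric.ball x r})

/-- Upper box (Minkowski) dimension. -/
noncomputable def upperBoxDim {α : Type*} [PseudoMetricSpace α] (s : Set α) : ℝ≥0∞ :=
  Filter.limsup
    (fun r : ℝ =>
      if coverNum s r = ⊤ then (⊤ : ℝ≥0∞)
      else ENNReal.ofReal (Real.log (coverNum s r).toReal / (-Real.log r)))
    (nhdsWithin 0 (Set.Ioi 0))

/-- Packing dimension, via the modified upper box dimension characterization. -/
noncomputable def packingDim {α : Type*} [PseudoMetricSpace α] (s : Set α) : ℝ≥0∞ :=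
  ⨅ (c : ℕ → Set α) (_ : s ⊆ ⋃ n, c n), ⨆ n, upperBoxDim (c n)

/-- The closed axis-parallel cube of side length `side` with lower corner `side • z`. -/
def fcCube (d : ℕ) (side : ℝ) (z : Fin d → ℕ) : Set (Fin d → ℝ) :=
  Set.pi Set.univ fun i => Set.Icc ((z i : ℝ) * side) (((z i : ℝ) + 1) * side)

/-! ### Auxiliary lemmas -/

lemma ofReal_le_ofReal_add_of_le {x y e : ℝ} (he : 0 ≤ e) (h : x ≤ y + e) :
    ENNReal.ofReal x ≤ ENNReal.ofReal y + ENNReal.ofReal e := by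
  rcases le_or_gt y 0 with hy | hy
  · have hxe : x ≤ e := by linarith
    calc ENNReal.ofReal x ≤ ENNReal.ofReal e := ENNReal.ofReal_le_ofReal hxe
      _ ≤ ENNReal.ofReal y + ENNReal.ofReal e := le_add_self
  · calc ENNReal.ofReal x ≤ ENNReal.ofReal (y + e) := ENNReal.ofReal_le_ofReal h
      _ = ENNReal.ofReal y + ENNReal.ofReal e := ENNReal.ofReal_add hy.le he

lemma limsup_le_limsup_add_of_tendsto_zero {a b e : ℕ → ℝ≥0∞}
    (h : ∀ᶠ k in atTop, a k ≤ b k + e k) (he : Tendsto e atTop (nhds 0)) :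
    limsup a atTop ≤ limsup b atTop := by
  by_cases hb : limsup b atTop = ⊤
  · simp [hb]
  refine ENNReal.le_of_forall_pos_le_add fun ε hε _ => ?_
  have hev : ∀ᶠ k in atTop, e k ≤ (ε : ℝ≥0∞) := by
    filter_upwards [he.eventually_lt_const (ENNReal.coe_pos.2 hε)] with k hk
    exact hk.le
  have h1 : ∀ᶠ k in atTop, a k ≤ b k + (ε : ℝ≥0∞) := by
    filter_upwards [h, hev] with k h1 h2
    exact h1.trans (by gcongr)
  calc limsup a atTop ≤ limsup (fun k => b k + (ε : ℝ≥0∞)) atTop := limsup_le_limsup h1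
    _ = limsup b atTop + (ε : ℝ≥0∞) := by
        exact limsup_add_const atTop b (ε : ℝ≥0∞) (by isBoundedDefault) (by isBoundedDefault)

/-- `k`-step descendants of `z0 ∈ S j`. -/
def fcDesc {d : ℕ} (N : ℕ → ℕ) (S : ℕ → Finset (Fin d → ℕ)) (j : ℕ) (z0 : Fin d → ℕ) :
    ℕ → Finset (Fin d → ℕ)
  | 0 => {z0}
  | (k+1) => (S (j+k+1)).filter
      (fun z => ∃ w ∈ fcDesc N S j z0 k, ∀ i, N (j+k) * w i ≤ z i ∧ z i < N (j+k) * (w i + 1))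

lemma fcDesc_subset {d : ℕ} (N : ℕ → ℕ) (S : ℕ → Finset (Fin d → ℕ)) (j : ℕ)
    (z0 : Fin d → ℕ) (hz0 : z0 ∈ S j) : ∀ k, fcDesc N S j z0 k ⊆ S (j + k)
  | 0 => by simpa [fcDesc] using hz0
  | (k+1) => Finset.filter_subset _ _

lemma fcDesc_card {d : ℕ} (N M : ℕ → ℕ) (S : ℕ → Finset (Fin d → ℕ))
    (hN : ∀ k, 2 ≤ N k)
    (hchildcount : ∀ k, ∀ w ∈ S k,
      ((S (k + 1)).filter fun z => ∀ i, N k * w i ≤ z i ∧ z i < N k * (w i + 1)).card = M k)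
    (j : ℕ) (z0 : Fin d → ℕ) (hz0 : z0 ∈ S j) :
    ∀ k, (fcDesc N S j z0 k).card = ∏ i ∈ Finset.range k, M (j + i)
  | 0 => by simp [fcDesc]
  | (k+1) => by
    have hrw : fcDesc N S j z0 (k+1) = (fcDesc N S j z0 k).biUnion
        (fun w => (S (j+k+1)).filter fun z =>
          ∀ i, N (j+k) * w i ≤ z i ∧ z i < N (j+k) * (w i + 1)) := by
      ext z
      simp only [fcDesc, Finset.mem_filter, Finset.mem_biUnion]
      tauto
    rw [hrw, Finset.card_biUnion, Finset.sum_congr rfl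
        (fun w hw => hchildcount (j+k) w (fcDesc_subset N S j z0 hz0 k hw))]
    · rw [Finset.sum_const, fcDesc_card N M S hN hchildcount j z0 hz0 k,
        Finset.prod_range_succ, smul_eq_mul]
    · intro w hw w' hw' hne
      simp only [Finset.disjoint_left, Finset.mem_filter]
      rintro z ⟨-, h1⟩ ⟨-, h2⟩
      apply hne
      funext i
      have e1 : z i / N (j+k) = w i :=
        Nat.div_eq_of_lt_le (by simpa [Nat.mul_comm] using (h1 i).1)
          (by simpa [Nat.mul_comm, Nat.mul_succ] using (h1 i).2)
      have e2 : z i / N (j+k) = w' i :=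
        Nat.div_eq_of_lt_le (by simpa [Nat.mul_comm] using (h2 i).1)
          (by simpa [Nat.mul_comm, Nat.mul_succ] using (h2 i).2)
      rw [← e1, e2]

lemma fcCube_subset_parent {d : ℕ} {n : ℕ} {s' : ℝ} (hs : 0 ≤ s') {w z : Fin d → ℕ}
    (h : ∀ i, n * w i ≤ z i ∧ z i < n * (w i + 1)) :
    fcCube d s' z ⊆ fcCube d ((n : ℝ) * s') w := by
  intro p hp i _
  obtain ⟨h1, h2⟩ := h i
  have hp' := hp i (Set.mem_univ i)
  have c1 : ((n : ℝ) * w i) ≤ z i := by exact_mod_cast h1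
  have c2 : ((z : Fin d → ℕ) i : ℝ) + 1 ≤ n * (w i + 1) := by exact_mod_cast h2
  constructor
  · calc (w i : ℝ) * (n * s') = ((n : ℝ) * w i) * s' := by ring
      _ ≤ (z i : ℝ) * s' := by nlinarith
      _ ≤ p i := hp'.1
  · calc p i ≤ ((z i : ℝ) + 1) * s' := hp'.2
      _ ≤ ((n : ℝ) * (w i + 1)) * s' := by nlinarith
      _ = ((w i : ℝ) + 1) * (n * s') := by ring

lemma fc_prodN_pos (N : ℕ → ℕ) (hN : ∀ k, 2 ≤ N k) (m : ℕ) :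
    0 < ∏ i ∈ Finset.range m, (N i : ℝ) :=
  Finset.prod_pos fun i _ => Nat.cast_pos.mpr (lt_of_lt_of_le two_pos (hN i))

lemma fc_prodN_ge (N : ℕ → ℕ) (hN : ∀ k, 2 ≤ N k) (m : ℕ) :
    (2 : ℝ) ^ m ≤ ∏ i ∈ Finset.range m, (N i : ℝ) := by
  calc (2:ℝ)^m = ∏ _i ∈ Finset.range m, (2:ℝ) := by rw [Finset.prod_const, Finset.card_range]
    _ ≤ _ := Finset.prod_le_prod (fun _ _ => by norm_num) (fun i _ => by exact_mod_cast hN i)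

lemma fc_sd_succ (N : ℕ → ℕ) (hN : ∀ k, 2 ≤ N k) (m : ℕ) :
    (N m : ℝ) * (∏ i ∈ Finset.range (m+1), (N i : ℝ))⁻¹
      = (∏ i ∈ Finset.range m, (N i : ℝ))⁻¹ := by
  have h1 := fc_prodN_pos N hN m
  have h2 : (0:ℝ) < N m := Nat.cast_pos.mpr (lt_of_lt_of_le two_pos (hN m))
  rw [Finset.prod_range_succ]
  field_simp

lemma fc_sd_pos (N : ℕ → ℕ) (hN : ∀ k, 2 ≤ N k) (m : ℕ) :
    0 < (∏ i ∈ Finset.range m, (N i : ℝ))⁻¹ := inv_pos.2 (fc_prodN_pos N hN m)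

lemma fcDesc_cube {d : ℕ} (N : ℕ → ℕ) (hN : ∀ k, 2 ≤ N k)
    (S : ℕ → Finset (Fin d → ℕ)) (j : ℕ) (z0 : Fin d → ℕ) :
    ∀ k, ∀ z ∈ fcDesc N S j z0 k,
      fcCube d (∏ i ∈ Finset.range (j+k), (N i : ℝ))⁻¹ z
        ⊆ fcCube d (∏ i ∈ Finset.range j, (N i : ℝ))⁻¹ z0
  | 0 => by
    intro z hz
    simp only [fcDesc, Finset.mem_singleton] at hz
    subst hz
    exact subset_rfl
  | (k+1) => by
    intro z hz
    simp only [fcDesc, Finset.mem_filter] at hz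
    obtain ⟨-, w, hw, hchild⟩ := hz
    have step := fcCube_subset_parent (d := d) (n := N (j+k))
      (s' := (∏ i ∈ Finset.range (j+k+1), (N i : ℝ))⁻¹)
      (le_of_lt (fc_sd_pos N hN (j+k+1))) hchild
    rw [fc_sd_succ N hN (j+k)] at step
    exact step.trans (fcDesc_cube N hN S j z0 k w hw)

lemma fc_coord_cases {s a : ℝ} (hs : 0 < s) {m : ℕ} {p : ℝ}
    (h1 : (m : ℝ) * s ≤ p) (h2 : p ≤ ((m : ℝ) + 1) * s) (h3 : a < p) (h4 : p < a + s) :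
    (m : ℤ) = ⌊a/s⌋ ∨ (m : ℤ) = ⌊a/s⌋ + 1 := by
  have hub : (m : ℝ) < a/s + 1 := by
    have hms : (m:ℝ) * s < a + s := lt_of_le_of_lt h1 h4
    have h' : (m:ℝ) < (a+s)/s := (lt_div_iff₀ hs).2 hms
    have : (a+s)/s = a/s + 1 := by field_simp
    linarith
  have hlb : a/s - 1 < (m : ℝ) := by
    have hms : a < ((m:ℝ)+1) * s := lt_of_lt_of_le h3 h2
    have h' : a/s < (m:ℝ) + 1 := (div_lt_iff₀ hs).2 (by linarith)
    linarith
  have f1 : (⌊a/s⌋ : ℝ) ≤ a/s := Int.floor_le _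
  have f2 : a/s < ⌊a/s⌋ + 1 := Int.lt_floor_add_one _
  have g1 : ((m : ℤ) : ℝ) < (⌊a/s⌋ : ℝ) + 2 := by push_cast; linarith
  have g2 : ((⌊a/s⌋ : ℝ)) - 1 < ((m : ℤ) : ℝ) := by push_cast; linarith
  have g1' : (m : ℤ) < ⌊a/s⌋ + 2 := by exact_mod_cast g1
  have g2' : ⌊a/s⌋ - 1 < (m : ℤ) := by exact_mod_cast g2
  omega

set_option maxHeartbeats 1000000 in
theorem fractalCube_packingDim_lower_bound (d : ℕ) (hd : 1 ≤ d) (N M : ℕ → ℕ)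
    (hN : ∀ k, 2 ≤ N k) (hM : ∀ k, 1 < M k ∧ M k < N k ^ d)
    (S : ℕ → Finset (Fin d → ℕ))
    (hS0 : S 0 = {fun _ => 0})
    (hbound : ∀ k, ∀ z ∈ S k, ∀ i, z i < ∏ j ∈ Finset.range k, N j)
    (hchildcount : ∀ k, ∀ w ∈ S k,
      ((S (k + 1)).filter fun z => ∀ i, N k * w i ≤ z i ∧ z i < N k * (w i + 1)).card = M k)
    (hparent : ∀ k, ∀ z ∈ S (k + 1), ∃ w ∈ S k, ∀ i, N k * w i ≤ z i ∧ z i < N k * (w i + 1))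
    (C : Set (Fin d → ℝ))
    (hC : C = ⋂ k, ⋃ z ∈ S k, fcCube d ((∏ j ∈ Finset.range k, (N j : ℝ))⁻¹) z) :
    Filter.limsup
        (fun k => ENNReal.ofReal
          (Real.log (∏ j ∈ Finset.range k, (M j : ℝ)) /
            Real.log (∏ j ∈ Finset.range k, (N j : ℝ)))) Filter.atTop
      ≤ packingDim C := by
  classical
  set sd : ℕ → ℝ := fun m => (∏ i ∈ Finset.range m, (N i : ℝ))⁻¹ with hsddef
  set CK : ℕ → Set (Fin d → ℝ) := fun m => ⋃ z ∈ S m, fcCube d (sd m) z with hCKdef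
  have hsdpos : ∀ m, 0 < sd m := fun m => fc_sd_pos N hN m
  have hcube_closed : ∀ (s : ℝ) (z : Fin d → ℕ), IsClosed (fcCube d s z) :=
    fun s z => isClosed_set_pi fun i _ => isClosed_Icc
  have hcube_compact : ∀ (s : ℝ) (z : Fin d → ℕ), IsCompact (fcCube d s z) :=
    fun s z => isCompact_univ_pi fun _ => isCompact_Icc
  have hcube_ne : ∀ (s : ℝ), 0 ≤ s → ∀ (z : Fin d → ℕ), (fcCube d s z).Nonempty := by
    intro s hs z
    refine ⟨fun i => (z i : ℝ) * s, fun i _ => ?_⟩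
    simp only
    exact ⟨le_rfl, by nlinarith [hs]⟩
  have hCKclosed : ∀ m, IsClosed (CK m) := by
    intro m
    exact (S m).finite_toSet.isClosed_biUnion fun z _ => hcube_closed _ z
  have hCcl : IsClosed C := by
    rw [hC]; exact isClosed_iInter fun k => hCKclosed k
  have hCsub : ∀ m, C ⊆ CK m := by
    intro m
    rw [hC]
    exact iInter_subset _ m
  have hcube_step : ∀ k, ∀ (w z : Fin d → ℕ),
      (∀ i, N k * w i ≤ z i ∧ z i < N k * (w i + 1)) →
      fcCube d (sd (k+1)) z ⊆ fcCube d (sd k) w := by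
    intro k w z hchild
    have := fcCube_subset_parent (d := d) (n := N k) (s' := sd (k+1))
      (le_of_lt (hsdpos (k+1))) hchild
    rwa [hsddef, fc_sd_succ N hN k] at this
  have hanc : ∀ k, ∀ z ∈ S k, ∀ m, m ≤ k → fcCube d (sd k) z ⊆ CK m := by
    intro k
    induction k with
    | zero =>
      intro z hz m hm
      interval_cases m
      exact fun p hp => Set.mem_biUnion hz hp
    | succ k ih =>
      intro z hz m hm
      rcases Nat.eq_or_lt_of_le hm with h | h
      · subst h
        exact fun p hp => Set.mem_biUnion hz hp
      · obtain ⟨w, hw, hchild⟩ := hparent k z hz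
        exact (hcube_step k w z hchild).trans (ih w hw m (Nat.lt_succ_iff.1 h))
  have hdesc : ∀ k, ∀ z ∈ S k, ∀ m, k ≤ m →
      ∃ z' ∈ S m, fcCube d (sd m) z' ⊆ fcCube d (sd k) z := by
    intro k z hz m hm
    induction m, hm using Nat.le_induction with
    | base => exact ⟨z, hz, subset_rfl⟩
    | succ m hm ih =>
      obtain ⟨z', hz', hsub⟩ := ih
      have hcard := hchildcount m z' hz'
      have hpos : 0 < ((S (m + 1)).filter fun z'' =>
          ∀ i, N m * z' i ≤ z'' i ∧ z'' i < N m * (z' i + 1)).card := by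
        rw [hcard]; exact lt_trans one_pos (hM m).1
      obtain ⟨z'', hz''⟩ := Finset.card_pos.1 hpos
      rw [Finset.mem_filter] at hz''
      exact ⟨z'', hz''.1, (hcube_step m z' z'' hz''.2).trans hsub⟩
  have hmeet : ∀ k, ∀ z ∈ S k, (C ∩ fcCube d (sd k) z).Nonempty := by
    intro k z hz
    set V : ℕ → Set (Fin d → ℝ) := fun m => CK m ∩ fcCube d (sd k) z with hV
    have hCKanti : ∀ m, CK (m+1) ⊆ CK m := by
      intro m p hp
      simp only [hCKdef, Set.mem_iUnion] at hp ⊢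
      obtain ⟨z', hz', hp⟩ := hp
      obtain ⟨w, hw, hchild⟩ := hparent m z' hz'
      exact ⟨w, hw, hcube_step m w z' hchild hp⟩
    have hVanti : ∀ m, V (m+1) ⊆ V m := fun m =>
      Set.inter_subset_inter_left _ (hCKanti m)
    have hVne : ∀ m, (V m).Nonempty := by
      intro m
      rcases le_total m k with hm | hm
      · obtain ⟨p, hp⟩ := hcube_ne (sd k) (le_of_lt (hsdpos k)) z
        exact ⟨p, hanc k z hz m hm hp, hp⟩
      · obtain ⟨z', hz', hsub⟩ := hdesc k z hz m hm
        obtain ⟨p, hp⟩ := hcube_ne (sd m) (le_of_lt (hsdpos m)) z'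
        exact ⟨p, Set.mem_biUnion hz' hp, hsub hp⟩
    have hV0 : IsCompact (V 0) := ((hcube_compact _ z).inter_left (hCKclosed 0))
    have hVcl : ∀ m, IsClosed (V m) := fun m => (hCKclosed m).inter (hcube_closed _ z)
    have hne := IsCompact.nonempty_iInter_of_sequence_nonempty_isCompact_isClosed
      V hVanti hVne hV0 hVcl
    obtain ⟨p, hp⟩ := hne
    simp only [Set.mem_iInter, Set.mem_inter_iff] at hp
    exact ⟨p, ⟨by rw [hC]; exact Set.mem_iInter.2 fun m => (hp m).1, (hp 0).2⟩⟩
  obtain ⟨p0, hp0C, -⟩ := hmeet 0 (fun _ => 0) (by simp [hS0])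
  -- unfold packingDim
  rw [packingDim]
  refine le_iInf fun c => le_iInf fun hcov => ?_
  -- Baire category on the compact set C
  haveI : Nonempty C := ⟨⟨p0, hp0C⟩⟩
  haveI : CompleteSpace C := hCcl.completeSpace_coe
  have hcover : (⋃ n, ((Subtype.val : C → (Fin d → ℝ)) ⁻¹' closure (c n))) = univ := by
    ext ⟨y, hy⟩
    simp only [Set.mem_iUnion, Set.mem_preimage, Set.mem_univ, iff_true]
    obtain ⟨n, hn⟩ := Set.mem_iUnion.1 (hcov hy)
    exact ⟨n, subset_closure hn⟩
  obtain ⟨n, x', hx'int⟩ := nonempty_interior_of_iUnion_of_closed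
    (fun n => (isClosed_closure.preimage continuous_subtype_val)) hcover
  obtain ⟨ε, hε, hball⟩ := Metric.isOpen_iff.1 isOpen_interior x' hx'int
  have hball' : ∀ y ∈ C, dist y (x' : Fin d → ℝ) < ε → y ∈ closure (c n) := by
    intro y hy hdist
    have hmem : (⟨y, hy⟩ : C) ∈ Metric.ball x' ε := by
      rwa [Metric.mem_ball, Subtype.dist_eq]
    exact (interior_subset (hball hmem) : (⟨y, hy⟩ : C) ∈ Subtype.val ⁻¹' closure (c n))
  -- pick a generation j with sd j < ε
  obtain ⟨j, hj⟩ : ∃ j : ℕ, ((2:ℝ)⁻¹) ^ j < ε := exists_pow_lt_of_lt_one hε (by norm_num)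
  have hsdj : sd j < ε := by
    refine lt_of_le_of_lt ?_ hj
    rw [hsddef]
    simp only
    rw [inv_pow]
    exact inv_anti₀ (by positivity) (fc_prodN_ge N hN j)
  -- pick the generation-j cube containing x'
  obtain ⟨z0, hz0, hxcube⟩ : ∃ z0 ∈ S j, (x' : Fin d → ℝ) ∈ fcCube d (sd j) z0 := by
    have := hCsub j (x'.2)
    simpa only [hCKdef, Set.mem_iUnion, exists_prop] using this
  have hkey : C ∩ fcCube d (sd j) z0 ⊆ closure (c n) := by
    rintro y ⟨hyC, hycube⟩
    refine hball' y hyC ?_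
    have hle : dist y (x' : Fin d → ℝ) ≤ sd j := by
      rw [dist_pi_le_iff (le_of_lt (hsdpos j))]
      intro i
      calc dist (y i) ((x' : Fin d → ℝ) i)
          ≤ ((z0 i : ℝ) + 1) * sd j - (z0 i : ℝ) * sd j :=
            Real.dist_le_of_mem_Icc (hycube i (Set.mem_univ i)) (hxcube i (Set.mem_univ i))
        _ = sd j := by ring
    linarith
  -- counting lemma
  have hcount : ∀ k, ∀ t : Finset (Fin d → ℝ),
      c n ⊆ ⋃ x ∈ t, Metric.ball x (sd (j+k)/4) →
      (∏ i ∈ Finset.range k, M (j+i)) ≤ t.card * 2^d := by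
    intro k t ht
    have hspos : 0 < sd (j+k) := hsdpos (j+k)
    have hcover2 : C ∩ fcCube d (sd j) z0 ⊆ ⋃ x ∈ t, Metric.ball x (sd (j+k)/2) := by
      refine hkey.trans ?_
      have hcl : closure (c n) ⊆ ⋃ x ∈ t, Metric.closedBall x (sd (j+k)/4) :=
        closure_minimal
          (ht.trans (Set.iUnion₂_mono fun x _ => Metric.ball_subset_closedBall))
          (t.finite_toSet.isClosed_biUnion fun x _ => Metric.isClosed_closedBall)
      exact hcl.trans (Set.iUnion₂_mono fun x _ =>
        Metric.closedBall_subset_ball (by linarith))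
    have hTS := fcDesc_subset N S j z0 hz0
    have hpt : ∀ z ∈ fcDesc N S j z0 k, ∃ p, p ∈ C ∩ fcCube d (sd (j+k)) z :=
      fun z hz => hmeet (j+k) z (hTS k hz)
    choose! p hp using hpt
    have hx : ∀ z ∈ fcDesc N S j z0 k, ∃ x ∈ t, p z ∈ Metric.ball x (sd (j+k)/2) := by
      intro z hz
      have hmem : p z ∈ C ∩ fcCube d (sd j) z0 :=
        ⟨(hp z hz).1, fcDesc_cube N hN S j z0 k z hz (hp z hz).2⟩
      have := hcover2 hmem
      simpa only [Set.mem_iUnion, exists_prop] using this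
    choose! x hxt hxball using hx
    set f : (Fin d → ℕ) → (Fin d → ℝ) × (Fin d → Bool) := fun z =>
      (x z, fun i => decide ((z i : ℤ) = ⌊(x z i - sd (j+k)/2) / sd (j+k)⌋ + 1)) with hf
    have hcases : ∀ z ∈ fcDesc N S j z0 k, ∀ i : Fin d,
        (z i : ℤ) = ⌊(x z i - sd (j+k)/2) / sd (j+k)⌋ ∨
        (z i : ℤ) = ⌊(x z i - sd (j+k)/2) / sd (j+k)⌋ + 1 := by
      intro z hz i
      have hcube := (hp z hz).2 i (Set.mem_univ i)
      have hdist : dist (p z i) (x z i) < sd (j+k)/2 :=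
        lt_of_le_of_lt (dist_le_pi_dist (p z) (x z) i) (hxball z hz)
      rw [Real.dist_eq, abs_sub_lt_iff] at hdist
      exact fc_coord_cases hspos hcube.1 hcube.2
        (by linarith [hdist.2]) (by linarith [hdist.1])
    have hmaps : ∀ z ∈ fcDesc N S j z0 k,
        f z ∈ t ×ˢ (Finset.univ : Finset (Fin d → Bool)) := by
      intro z hz
      rw [Finset.mem_product]
      exact ⟨hxt z hz, Finset.mem_univ _⟩
    have hinj : ∀ z ∈ fcDesc N S j z0 k, ∀ z' ∈ fcDesc N S j z0 k, f z = f z' → z = z' := by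
      intro z hz z' hz' hfeq
      have hxeq : x z = x z' := congrArg Prod.fst hfeq
      have hbeq := congrArg Prod.snd hfeq
      funext i
      have hbi : decide ((z i : ℤ) = ⌊(x z i - sd (j+k)/2) / sd (j+k)⌋ + 1)
          = decide ((z' i : ℤ) = ⌊(x z' i - sd (j+k)/2) / sd (j+k)⌋ + 1) :=
        congrFun hbeq i
      rw [decide_eq_decide] at hbi
      have h1 := hcases z hz i
      have h2 := hcases z' hz' i
      rw [hxeq] at h1 hbi
      have : (z i : ℤ) = (z' i : ℤ) := by
        rcases h1 with h1 | h1 <;> rcases h2 with h2 | h2 <;> omega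
      exact_mod_cast this
    calc (∏ i ∈ Finset.range k, M (j+i))
        = (fcDesc N S j z0 k).card := (fcDesc_card N M S hN hchildcount j z0 hz0 k).symm
      _ ≤ (t ×ˢ (Finset.univ : Finset (Fin d → Bool))).card :=
          Finset.card_le_card_of_injOn f hmaps hinj
      _ = t.card * 2^d := by
          rw [Finset.card_product, Finset.card_univ]
          congr 1
          simp [Fintype.card_fun]
  -- the ENNReal covering number bound
  set u : ℕ → ℝ := fun k => sd (j+k)/4 with hudef
  have hu_pos : ∀ k, 0 < u k := fun k => by
    have := hsdpos (j+k); simp only [hudef]; linarith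
  have h2d0 : ((2:ℝ≥0∞)^d) ≠ 0 := by
    simp
  have h2dtop : ((2:ℝ≥0∞)^d) ≠ ⊤ := by
    exact ENNReal.pow_ne_top (by norm_num)
  have hcovN : ∀ k, ((∏ i ∈ Finset.range k, M (j+i) : ℕ) : ℝ≥0∞) / 2^d
      ≤ coverNum (c n) (u k) := by
    intro k
    rw [coverNum]
    refine le_sInf ?_
    rintro b ⟨t, ht, rfl⟩
    rw [ENNReal.div_le_iff_le_mul (Or.inl h2d0) (Or.inl h2dtop)]
    have hcnt := hcount k t ht
    calc ((∏ i ∈ Finset.range k, M (j+i) : ℕ) : ℝ≥0∞)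
        ≤ ((t.card * 2^d : ℕ) : ℝ≥0∞) := by exact_mod_cast Nat.cast_le.2 hcnt
      _ = (t.card : ℝ≥0∞) * 2^d := by push_cast; ring
  set φ : ℝ → ℝ≥0∞ := fun r =>
    if coverNum (c n) r = ⊤ then (⊤ : ℝ≥0∞)
    else ENNReal.ofReal (Real.log (coverNum (c n) r).toReal / (-Real.log r)) with hphidef
  have hu_tendsto : Tendsto u atTop (nhdsWithin 0 (Set.Ioi 0)) := by
    apply tendsto_nhdsWithin_of_tendsto_nhds_of_eventually_within
    · have hb : ∀ k : ℕ, u k ≤ ((2:ℝ)⁻¹)^k := by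
        intro k
        have h1 : sd (j+k) ≤ ((2:ℝ)⁻¹)^(j+k) := by
          rw [hsddef]
          simp only
          rw [inv_pow]
          exact inv_anti₀ (by positivity) (fc_prodN_ge N hN (j+k))
        have h2 : ((2:ℝ)⁻¹)^(j+k) ≤ ((2:ℝ)⁻¹)^k :=
          pow_le_pow_of_le_one (by norm_num) (by norm_num) (Nat.le_add_left k j)
        have h3 : u k = sd (j+k)/4 := rfl
        have := hsdpos (j+k)
        rw [h3]
        linarith
      exact squeeze_zero (fun k => (hu_pos k).le) hb
        (tendsto_pow_atTop_nhds_zero_of_lt_one (by norm_num) (by norm_num))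
    · exact Filter.Eventually.of_forall fun k => hu_pos k
  have hstep1 : limsup (fun k => φ (u k)) atTop ≤ upperBoxDim (c n) := by
    have hle : map u atTop ≤ nhdsWithin 0 (Set.Ioi 0) := hu_tendsto
    exact limsup_le_limsup_of_le hle
  -- constants
  set A := Real.log (∏ i ∈ Finset.range j, (M i : ℝ)) with hAdef
  have hA0 : 0 ≤ A := by
    refine Real.log_nonneg ?_
    have h1 : (1:ℕ) ≤ ∏ i ∈ Finset.range j, M i :=
      Finset.one_le_prod' fun i _ => (hM i).1.le
    exact_mod_cast h1
  have hlog2 : 0 < Real.log 2 := Real.log_pos (by norm_num)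
  have hlog4 : 0 < Real.log 4 := Real.log_pos (by norm_num)
  set c2 : ℝ := d * Real.log 4 + (A + d * Real.log 2) with hc2def
  have hc20 : 0 ≤ c2 := by
    have hd0 : (0:ℝ) ≤ d := Nat.cast_nonneg d
    rw [hc2def]
    nlinarith
  set e : ℕ → ℝ≥0∞ := fun k => ENNReal.ofReal (c2 / (k * Real.log 2)) with hedef
  have hetend : Tendsto e atTop (nhds 0) := by
    have h1 : Tendsto (fun k : ℕ => c2 / ((k:ℝ) * Real.log 2)) atTop (nhds 0) := by
      apply Tendsto.div_atTop tendsto_const_nhds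
      exact Tendsto.atTop_mul_const hlog2 tendsto_natCast_atTop_atTop
    have h2 := (ENNReal.continuous_ofReal.tendsto 0).comp h1
    rw [ENNReal.ofReal_zero] at h2
    exact h2
  -- pointwise bound
  have hpoint : ∀ᶠ k in atTop,
      ENNReal.ofReal
          (Real.log (∏ i ∈ Finset.range (k+j), (M i : ℝ)) /
            Real.log (∏ i ∈ Finset.range (k+j), (N i : ℝ))) ≤ φ (u k) + e k := by
    filter_upwards [eventually_ge_atTop 1] with k hk1
    rw [Nat.add_comm k j]
    set L := Real.log (∏ i ∈ Finset.range (j+k), (M i : ℝ)) with hLdef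
    set B := Real.log (∏ i ∈ Finset.range (j+k), (N i : ℝ)) with hBdef
    have hPNpos := fc_prodN_pos N hN (j+k)
    have hPMpos : (0:ℝ) < ∏ i ∈ Finset.range (j+k), (M i : ℝ) :=
      Finset.prod_pos fun i _ => by exact_mod_cast lt_trans one_pos (hM i).1
    have hkR : (1:ℝ) ≤ (k:ℝ) := by exact_mod_cast hk1
    have hBge : (k : ℝ) * Real.log 2 ≤ B := by
      calc (k:ℝ) * Real.log 2 ≤ ((j+k : ℕ):ℝ) * Real.log 2 := by
            have : (k:ℝ) ≤ ((j+k:ℕ):ℝ) := by exact_mod_cast Nat.le_add_left k j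
            nlinarith
        _ = Real.log ((2:ℝ)^(j+k)) := by rw [Real.log_pow]
        _ ≤ B := Real.log_le_log (by positivity) (fc_prodN_ge N hN (j+k))
    have hklog : 0 < (k:ℝ) * Real.log 2 := by nlinarith
    have hB0 : 0 < B := lt_of_lt_of_le hklog hBge
    have hL0 : 0 ≤ L := by
      refine Real.log_nonneg ?_
      have h1 : (1:ℕ) ≤ ∏ i ∈ Finset.range (j+k), M i :=
        Finset.one_le_prod' fun i _ => (hM i).1.le
      exact_mod_cast h1
    have hLdB : L ≤ d * B := by
      have h1 : (∏ i ∈ Finset.range (j+k), (M i : ℝ))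
          ≤ ∏ i ∈ Finset.range (j+k), ((N i : ℝ))^d :=
        Finset.prod_le_prod (fun i _ => by positivity)
          (fun i _ => by exact_mod_cast (hM i).2.le)
      have h2 : L ≤ Real.log (∏ i ∈ Finset.range (j+k), ((N i:ℝ))^d) :=
        Real.log_le_log hPMpos h1
      rwa [Finset.prod_pow, Real.log_pow] at h2
    have hBc : 0 < B + Real.log 4 := by linarith
    have hreal : L / B ≤ (L - (A + d * Real.log 2)) / (B + Real.log 4)
        + c2 / ((k:ℝ) * Real.log 2) := by
      have hcA0 : 0 ≤ A + d * Real.log 2 := by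
        have hd0 : (0:ℝ) ≤ d := Nat.cast_nonneg d
        nlinarith
      have hkey2 : L / B - (L - (A + d * Real.log 2)) / (B + Real.log 4)
          ≤ c2 / ((k:ℝ)*Real.log 2) := by
        rw [div_sub_div _ _ (ne_of_gt hB0) (ne_of_gt hBc)]
        have hnum : L * (B + Real.log 4) - B * (L - (A + d * Real.log 2))
            = L * Real.log 4 + (A + d * Real.log 2) * B := by ring
        rw [hnum, div_le_div_iff₀ (mul_pos hB0 hBc) hklog]
        have hd0 : (0:ℝ) ≤ d := Nat.cast_nonneg d
        have t1 : L * Real.log 4 ≤ (d:ℝ) * B * Real.log 4 :=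
          mul_le_mul_of_nonneg_right hLdB hlog4.le
        have e1 : (L * Real.log 4 + (A + d * Real.log 2) * B) * ((k:ℝ) * Real.log 2)
            ≤ ((d:ℝ) * B * Real.log 4 + (A + d * Real.log 2) * B) * ((k:ℝ) * Real.log 2) :=
          mul_le_mul_of_nonneg_right (add_le_add t1 le_rfl) hklog.le
        have hf : 0 ≤ (d:ℝ) * B * Real.log 4 + (A + d * Real.log 2) * B :=
          add_nonneg (mul_nonneg (mul_nonneg hd0 hB0.le) hlog4.le)
            (mul_nonneg hcA0 hB0.le)
        have e2 : ((d:ℝ) * B * Real.log 4 + (A + d * Real.log 2) * B) * ((k:ℝ) * Real.log 2)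
            ≤ ((d:ℝ) * B * Real.log 4 + (A + d * Real.log 2) * B) * B :=
          mul_le_mul_of_nonneg_left hBge hf
        have e3 : ((d:ℝ) * B * Real.log 4 + (A + d * Real.log 2) * B) * B
            ≤ c2 * (B * (B + Real.log 4)) := by
          rw [hc2def]
          nlinarith [mul_nonneg (mul_nonneg (add_nonneg (mul_nonneg hd0 hlog4.le) hcA0) hB0.le) hlog4.le]
        linarith
      linarith
    by_cases hT : coverNum (c n) (u k) = ⊤
    · have hphi : φ (u k) = ⊤ := by rw [hphidef]; simp [hT]
      rw [hphi]
      simp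
    · have hphi : φ (u k) = ENNReal.ofReal
          (Real.log (coverNum (c n) (u k)).toReal / (-Real.log (u k))) := by
        rw [hphidef]
        simp [hT]
      have hlogu : -Real.log (u k) = B + Real.log 4 := by
        have h3 : u k = (∏ i ∈ Finset.range (j+k), (N i:ℝ))⁻¹ / 4 := rfl
        rw [h3, Real.log_div (by positivity) (by norm_num), Real.log_inv, hBdef]
        ring
      set P : ℕ := ∏ i ∈ Finset.range k, M (j+i) with hPdef
      have hPpos : (0:ℝ) < (P:ℝ) := by
        have : 0 < P := Finset.prod_pos fun i _ => lt_trans one_pos (hM (j+i)).1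
        exact_mod_cast this
      have hCv := hcovN k
      have hCvreal : (P:ℝ)/2^d ≤ (coverNum (c n) (u k)).toReal := by
        have h1 : ((P:ℝ≥0∞)/2^d).toReal ≤ (coverNum (c n) (u k)).toReal :=
          ENNReal.toReal_mono hT hCv
        rwa [ENNReal.toReal_div, ENNReal.toReal_natCast, ENNReal.toReal_pow,
          ENNReal.toReal_ofNat] at h1
      have hlogP : Real.log (P:ℝ) = L - A := by
        have hsplit : (∏ i ∈ Finset.range (j+k), (M i:ℝ))
            = (∏ i ∈ Finset.range j, (M i:ℝ)) * (P:ℝ) := by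
          rw [hPdef]
          push_cast
          rw [Finset.prod_range_add]
        have hApos : (0:ℝ) < ∏ i ∈ Finset.range j, (M i:ℝ) :=
          Finset.prod_pos fun i _ => by exact_mod_cast lt_trans one_pos (hM i).1
        have := Real.log_mul (ne_of_gt hApos) (ne_of_gt hPpos)
        rw [← hsplit] at this
        rw [hLdef, this, hAdef]
        ring
      have hlogCv : L - A - (d:ℝ) * Real.log 2 ≤ Real.log (coverNum (c n) (u k)).toReal := by
        have h2 : Real.log ((P:ℝ)/2^d) ≤ Real.log (coverNum (c n) (u k)).toReal :=
          Real.log_le_log (by positivity) hCvreal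
        have h3 : Real.log ((P:ℝ)/2^d) = Real.log (P:ℝ) - (d:ℝ) * Real.log 2 := by
          rw [Real.log_div (ne_of_gt hPpos) (by positivity), Real.log_pow]
        rw [h3, hlogP] at h2
        linarith
      rw [hphi, hlogu, hedef]
      refine le_trans (ofReal_le_ofReal_add_of_le ?_ hreal) ?_
      · positivity
      · refine add_le_add (ENNReal.ofReal_le_ofReal ?_) le_rfl
        gcongr
        linarith
  have hmain := limsup_le_limsup_add_of_tendsto_zero hpoint hetend
  have hshift : limsup
      (fun k => ENNReal.ofReal
          (Real.log (∏ i ∈ Finset.range k, (M i : ℝ)) /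
            Real.log (∏ i ∈ Finset.range k, (N i : ℝ)))) atTop
      = limsup (fun k => ENNReal.ofReal
          (Real.log (∏ i ∈ Finset.range (k+j), (M i : ℝ)) /
            Real.log (∏ i ∈ Finset.range (k+j), (N i : ℝ)))) atTop := by
    conv_lhs => rw [← Filter.map_add_atTop_eq_nat j]
    rfl
  exact le_trans (le_of_eq hshift)
    (le_trans hmain (le_trans hstep1 (le_iSup (fun m => upperBoxDim (c m)) n)))
end
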